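/- Let K : [0,∞)³ → [0,∞) be measurable, symmetric in its first two arguments, and bounded by Λ. Then for any two probability measures μ, ν on [0,∞) and any bounded measurable f with ‖f‖_∞ ≤ 1, one has |⟨f, Q(μ)⟩ − ⟨f, Q(ν)⟩| ≤ 24 Λ ‖μ − ν‖_TV, where ‖·‖_TV denotes the total variation norm. -/

import Mathlib

open MeasureTheory Set Classical

noncomputable section

/-- The collision domain `D = {(ω₁,ω₂,ω₃) ∈ [0,∞)³ : ω₁ + ω₂ ≥ ω₃}`. -/
def Ddom : Set (ℝ × ℝ × ℝ) :=
  {p | 0 ≤ p.1 ∧ 0 ≤ p.2.1 ∧ 0 ≤ p.2.2 ∧ p.2.2 ≤ p.1 + p.2.1}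

/-- Integrand of the weak collision operator (with the indicator of `D` built in). -/
def collisionIntegrand (K : ℝ → ℝ → ℝ → ℝ) (f : ℝ → ℝ) (p : ℝ × ℝ × ℝ) : ℝ :=
  if p ∈ Ddom then
    (f (p.1 + p.2.1 - p.2.2) + f p.2.2 - f p.2.1 - f p.1) * K p.1 p.2.1 p.2.2
  else 0

/-- `⟨f, Q(μ)⟩`. -/
def Qpair (K : ℝ → ℝ → ℝ → ℝ) (μ : Measure ℝ) (f : ℝ → ℝ) : ℝ :=
  (1 / 2) * ∫ p, collisionIntegrand K f p ∂(μ.prod (μ.prod μ))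

/-- Bounded measurable functions are integrable against finite measures. -/
lemma aux_integrable {α : Type*} [MeasurableSpace α] (m : Measure α) [IsFiniteMeasure m]
    {h : α → ℝ} (hm : Measurable h) {C : ℝ} (hC : ∀ x, |h x| ≤ C) : Integrable h m := by
  refine (integrable_const C).mono' hm.aestronglyMeasurable ?_
  exact ae_of_all _ fun x => by simpa [Real.norm_eq_abs] using hC x

/-- Integral of a bounded function against a probability measure is bounded. -/
lemma aux_int_bound {α : Type*} [MeasurableSpace α] (m : Measure α) [IsProbabilityMeasure m]
    {h : α → ℝ} {C : ℝ} (hC : ∀ x, |h x| ≤ C) :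
    |∫ x, h x ∂m| ≤ C := by
  have := norm_integral_le_of_norm_le_const (μ := m) (f := h) (C := C)
    (ae_of_all _ fun x => by simpa [Real.norm_eq_abs] using hC x)
  simpa [Real.norm_eq_abs] using this

/-- Key TV perturbation lemma. -/
lemma aux_tv_key (μ ν : Measure ℝ) [IsFiniteMeasure μ] [IsFiniteMeasure ν]
    {h : ℝ → ℝ} (hm : Measurable h) {C : ℝ} (hC : ∀ x, |h x| ≤ C) :
    |∫ x, h x ∂μ - ∫ x, h x ∂ν| ≤
      C * ((μ.toSignedMeasure - ν.toSignedMeasure).totalVariation Set.univ).toReal := by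
  set s : SignedMeasure ℝ := μ.toSignedMeasure - ν.toSignedMeasure with hs
  set p : Measure ℝ := s.toJordanDecomposition.posPart with hp
  set n : Measure ℝ := s.toJordanDecomposition.negPart with hn
  have hC0 : 0 ≤ C := le_trans (abs_nonneg _) (hC 0)
  have hsA : ∀ A : Set ℝ, MeasurableSet A →
      (μ A).toReal + (n A).toReal = (ν A).toReal + (p A).toReal := by
    intro A hA
    have h1 : s A = (μ A).toReal - (ν A).toReal := by
      rw [hs, VectorMeasure.sub_apply, Measure.toSignedMeasure_apply_measurable hA,
        Measure.toSignedMeasure_apply_measurable hA]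
      rfl
    have h2 : s A = (p A).toReal - (n A).toReal := by
      conv_lhs => rw [← s.toSignedMeasure_toJordanDecomposition]
      rw [JordanDecomposition.toSignedMeasure, Measure.toSignedMeasure_sub_apply hA]
      rfl
    linarith [h1, h2]
  have hmeq : μ + n = ν + p := by
    ext A hA
    have h1 := hsA A hA
    have h2 : ((μ + n) A).toReal = ((ν + p) A).toReal := by
      simp only [Measure.add_apply]
      rw [ENNReal.toReal_add (measure_ne_top _ _) (measure_ne_top _ _),
        ENNReal.toReal_add (measure_ne_top _ _) (measure_ne_top _ _)]
      exact h1
    have h3 : (μ + n) A ≠ ⊤ := measure_ne_top _ _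
    have h4 : (ν + p) A ≠ ⊤ := measure_ne_top _ _
    exact (ENNReal.toReal_eq_toReal_iff' h3 h4).mp h2
  have hiμ := aux_integrable μ hm hC
  have hiν := aux_integrable ν hm hC
  have hip := aux_integrable p hm hC
  have hin := aux_integrable n hm hC
  have hint : ∫ x, h x ∂μ + ∫ x, h x ∂n = ∫ x, h x ∂ν + ∫ x, h x ∂p := by
    rw [← integral_add_measure hiμ hin, ← integral_add_measure hiν hip, hmeq]
  have hbp : |∫ x, h x ∂p| ≤ C * (p Set.univ).toReal := by
    have := norm_integral_le_of_norm_le_const (μ := p) (f := h) (C := C)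
      (ae_of_all _ fun x => by simpa [Real.norm_eq_abs] using hC x)
    exact (by simpa [Real.norm_eq_abs] using this : |∫ x, h x ∂p| ≤ C * p.real Set.univ)
  have hbn : |∫ x, h x ∂n| ≤ C * (n Set.univ).toReal := by
    have := norm_integral_le_of_norm_le_const (μ := n) (f := h) (C := C)
      (ae_of_all _ fun x => by simpa [Real.norm_eq_abs] using hC x)
    exact (by simpa [Real.norm_eq_abs] using this : |∫ x, h x ∂n| ≤ C * n.real Set.univ)
  have htv : (s.totalVariation Set.univ).toReal
      = (p Set.univ).toReal + (n Set.univ).toReal := by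
    rw [SignedMeasure.totalVariation, Measure.add_apply,
      ENNReal.toReal_add (measure_ne_top _ _) (measure_ne_top _ _)]
  have : ∫ x, h x ∂μ - ∫ x, h x ∂ν = ∫ x, h x ∂p - ∫ x, h x ∂n := by linarith
  rw [this, htv]
  calc |∫ x, h x ∂p - ∫ x, h x ∂n| ≤ |∫ x, h x ∂p| + |∫ x, h x ∂n| := abs_sub _ _
    _ ≤ C * (p Set.univ).toReal + C * (n Set.univ).toReal := add_le_add hbp hbn
    _ = C * ((p Set.univ).toReal + (n Set.univ).toReal) := by ring

lemma aux_triple (g : ℝ × ℝ × ℝ → ℝ) (hg : Measurable g) {C : ℝ} (hC : ∀ p, |g p| ≤ C)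
    (μ ν : Measure ℝ) [IsProbabilityMeasure μ] [IsProbabilityMeasure ν] :
    |∫ p, g p ∂(μ.prod (μ.prod μ)) - ∫ p, g p ∂(ν.prod (ν.prod ν))| ≤
      3 * C * ((μ.toSignedMeasure - ν.toSignedMeasure).totalVariation Set.univ).toReal := by
  set T := ((μ.toSignedMeasure - ν.toSignedMeasure).totalVariation Set.univ).toReal with hT
  have hgS : StronglyMeasurable g := hg.stronglyMeasurable
  -- F3: integrate out the third coordinate against μ
  have hmap3 : Measurable fun q : (ℝ × ℝ) × ℝ => g (q.1.1, q.1.2, q.2) :=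
    hg.comp ((measurable_fst.fst).prodMk ((measurable_fst.snd).prodMk measurable_snd))
  set F3 : ℝ × ℝ → ℝ := fun q => ∫ z, g (q.1, q.2, z) ∂μ with hF3
  have hF3m : Measurable F3 :=
    (hmap3.stronglyMeasurable.integral_prod_right' (ν := μ)).measurable
  have hF3b : ∀ q, |F3 q| ≤ C := fun q => aux_int_bound μ (fun z => hC _)
  -- F2: integrate out the second coordinate against ν
  have hmap2 : Measurable fun q : (ℝ × ℝ) × ℝ => g (q.1.1, q.2, q.1.2) :=
    hg.comp ((measurable_fst.fst).prodMk (measurable_snd.prodMk (measurable_fst.snd)))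
  set F2 : ℝ × ℝ → ℝ := fun q => ∫ y, g (q.1, y, q.2) ∂ν with hF2
  have hF2m : Measurable F2 :=
    (hmap2.stronglyMeasurable.integral_prod_right' (ν := ν)).measurable
  have hF2b : ∀ q, |F2 q| ≤ C := fun q => aux_int_bound ν (fun y => hC _)
  -- h1
  set h1 : ℝ → ℝ := fun x => ∫ w, g (x, w) ∂(μ.prod μ) with hh1
  have hh1m : Measurable h1 := (hgS.integral_prod_right' (ν := μ.prod μ)).measurable
  have hh1b : ∀ x, |h1 x| ≤ C := fun x => aux_int_bound (μ.prod μ) (fun w => hC _)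
  -- h2
  set h2 : ℝ → ℝ := fun y => ∫ x, F3 (x, y) ∂ν with hh2
  have hh2m : Measurable h2 := (hF3m.stronglyMeasurable.integral_prod_left' (μ := ν)).measurable
  have hh2b : ∀ y, |h2 y| ≤ C := fun y => aux_int_bound ν (fun x => hF3b _)
  -- h3
  set h3 : ℝ → ℝ := fun z => ∫ x, F2 (x, z) ∂ν with hh3
  have hh3m : Measurable h3 := (hF2m.stronglyMeasurable.integral_prod_left' (μ := ν)).measurable
  have hh3b : ∀ z, |h3 z| ≤ C := fun z => aux_int_bound ν (fun x => hF2b _)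
  -- representation of triple integrals
  have rep1 : ∀ (α : Measure ℝ) [IsProbabilityMeasure α],
      ∫ p, g p ∂(α.prod (μ.prod μ)) = ∫ x, h1 x ∂α := by
    intro α _
    exact integral_prod g (aux_integrable _ hg hC)
  have rep2 : ∀ (β : Measure ℝ) [IsProbabilityMeasure β],
      ∫ p, g p ∂(ν.prod (β.prod μ)) = ∫ y, h2 y ∂β := by
    intro β _
    rw [integral_prod g (aux_integrable _ hg hC)]
    have step : ∀ x : ℝ, ∫ w, g (x, w) ∂(β.prod μ) = ∫ y, F3 (x, y) ∂β := by
      intro x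
      rw [integral_prod (fun w => g (x, w))
        (aux_integrable _ (hg.comp (measurable_const.prodMk measurable_id)) (fun w => hC _))]
    simp_rw [step]
    exact integral_integral_swap (aux_integrable _ hF3m hF3b)
  have rep3 : ∀ (γ : Measure ℝ) [IsProbabilityMeasure γ],
      ∫ p, g p ∂(ν.prod (ν.prod γ)) = ∫ z, h3 z ∂γ := by
    intro γ _
    rw [integral_prod g (aux_integrable _ hg hC)]
    have step : ∀ x : ℝ, ∫ w, g (x, w) ∂(ν.prod γ) = ∫ z, F2 (x, z) ∂γ := by
      intro x
      rw [integral_prod (fun w => g (x, w))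
        (aux_integrable _ (hg.comp (measurable_const.prodMk measurable_id)) (fun w => hC _))]
      exact integral_integral_swap
        (aux_integrable _ (hg.comp (measurable_const.prodMk measurable_id)) (fun w => hC _))
    simp_rw [step]
    exact integral_integral_swap (aux_integrable _ hF2m hF2b)
  have key1 : |∫ p, g p ∂(μ.prod (μ.prod μ)) - ∫ p, g p ∂(ν.prod (μ.prod μ))| ≤ C * T := by
    rw [rep1 μ, rep1 ν]; exact aux_tv_key μ ν hh1m hh1b
  have key2 : |∫ p, g p ∂(ν.prod (μ.prod μ)) - ∫ p, g p ∂(ν.prod (ν.prod μ))| ≤ C * T := by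
    rw [rep2 μ, rep2 ν]; exact aux_tv_key μ ν hh2m hh2b
  have key3 : |∫ p, g p ∂(ν.prod (ν.prod μ)) - ∫ p, g p ∂(ν.prod (ν.prod ν))| ≤ C * T := by
    rw [rep3 μ, rep3 ν]; exact aux_tv_key μ ν hh3m hh3b
  calc |∫ p, g p ∂(μ.prod (μ.prod μ)) - ∫ p, g p ∂(ν.prod (ν.prod ν))|
      ≤ |∫ p, g p ∂(μ.prod (μ.prod μ)) - ∫ p, g p ∂(ν.prod (μ.prod μ))|
        + |∫ p, g p ∂(ν.prod (μ.prod μ)) - ∫ p, g p ∂(ν.prod (ν.prod μ))|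
        + |∫ p, g p ∂(ν.prod (ν.prod μ)) - ∫ p, g p ∂(ν.prod (ν.prod ν))| := by
        have := abs_sub_le (∫ p, g p ∂(μ.prod (μ.prod μ))) (∫ p, g p ∂(ν.prod (μ.prod μ)))
          (∫ p, g p ∂(ν.prod (ν.prod ν)))
        have := abs_sub_le (∫ p, g p ∂(ν.prod (μ.prod μ))) (∫ p, g p ∂(ν.prod (ν.prod μ)))
          (∫ p, g p ∂(ν.prod (ν.prod ν)))
        linarith
    _ ≤ C * T + C * T + C * T := by linarith
    _ = 3 * C * T := by ring

theorem Qpair_tv_stability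
    (K : ℝ → ℝ → ℝ → ℝ)
    (hKmeas : Measurable fun p : ℝ × ℝ × ℝ => K p.1 p.2.1 p.2.2)
    (hKsymm : ∀ ω₁ ω₂ ω₃ : ℝ, K ω₁ ω₂ ω₃ = K ω₂ ω₁ ω₃)
    (Λ : ℝ) (hKbd : ∀ ω₁ ω₂ ω₃ : ℝ, 0 ≤ K ω₁ ω₂ ω₃ ∧ K ω₁ ω₂ ω₃ ≤ Λ)
    (μ ν : Measure ℝ) [IsProbabilityMeasure μ] [IsProbabilityMeasure ν]
    (hsuppμ : μ (Set.Iio 0) = 0) (hsuppν : ν (Set.Iio 0) = 0)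
    (f : ℝ → ℝ) (hfmeas : Measurable f) (hfbd : ∀ ω, |f ω| ≤ 1) :
    |Qpair K μ f - Qpair K ν f| ≤
      24 * Λ * ((μ.toSignedMeasure - ν.toSignedMeasure).totalVariation Set.univ).toReal := by
  have hΛ : 0 ≤ Λ := le_trans (hKbd 0 0 0).1 (hKbd 0 0 0).2
  set T := ((μ.toSignedMeasure - ν.toSignedMeasure).totalVariation Set.univ).toReal with hT
  have hT0 : 0 ≤ T := ENNReal.toReal_nonneg
  -- measurability of the collision integrand
  have hD : MeasurableSet Ddom := by
    have : Ddom = {p : ℝ × ℝ × ℝ | 0 ≤ p.1} ∩ {p | 0 ≤ p.2.1} ∩ {p | 0 ≤ p.2.2} ∩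
        {p | p.2.2 ≤ p.1 + p.2.1} := by
      ext p; simp [Ddom]; tauto
    rw [this]
    refine MeasurableSet.inter (MeasurableSet.inter (MeasurableSet.inter ?_ ?_) ?_) ?_
    · exact measurableSet_le measurable_const measurable_fst
    · exact measurableSet_le measurable_const measurable_snd.fst
    · exact measurableSet_le measurable_const measurable_snd.snd
    · exact measurableSet_le measurable_snd.snd (measurable_fst.add measurable_snd.fst)
  have hg : Measurable (collisionIntegrand K f) := by
    unfold collisionIntegrand
    refine Measurable.ite hD ?_ measurable_const
    refine Measurable.mul ?_ hKmeas
    have h1 : Measurable fun p : ℝ × ℝ × ℝ => f (p.1 + p.2.1 - p.2.2) :=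
      hfmeas.comp ((measurable_fst.add measurable_snd.fst).sub measurable_snd.snd)
    exact ((h1.add (hfmeas.comp measurable_snd.snd)).sub
      (hfmeas.comp measurable_snd.fst)).sub (hfmeas.comp measurable_fst)
  have hgb : ∀ p, |collisionIntegrand K f p| ≤ 4 * Λ := by
    intro p
    unfold collisionIntegrand
    split_ifs with h
    · rw [abs_mul]
      have h4 : |f (p.1 + p.2.1 - p.2.2) + f p.2.2 - f p.2.1 - f p.1| ≤ 4 := by
        have b1 := abs_le.mp (hfbd (p.1 + p.2.1 - p.2.2))
        have b2 := abs_le.mp (hfbd p.2.2)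
        have b3 := abs_le.mp (hfbd p.2.1)
        have b4 := abs_le.mp (hfbd p.1)
        exact abs_le.mpr ⟨by linarith [b1.1, b2.1, b3.2, b4.2], by linarith [b1.2, b2.2, b3.1, b4.1]⟩
      have hK := hKbd p.1 p.2.1 p.2.2
      have hKabs : |K p.1 p.2.1 p.2.2| ≤ Λ := by rw [abs_of_nonneg hK.1]; exact hK.2
      exact mul_le_mul h4 hKabs (abs_nonneg _) (by norm_num)
    · simp; positivity
  have key := aux_triple (collisionIntegrand K f) hg hgb μ ν
  rw [← hT] at key
  have hQ : Qpair K μ f - Qpair K ν f = (1 / 2) *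
      (∫ p, collisionIntegrand K f p ∂(μ.prod (μ.prod μ))
        - ∫ p, collisionIntegrand K f p ∂(ν.prod (ν.prod ν))) := by
    unfold Qpair; ring
  rw [hQ, abs_mul]
  have : |(1 : ℝ) / 2| = 1 / 2 := by norm_num
  rw [this]
  nlinarith [mul_nonneg hΛ hT0, key, abs_nonneg (∫ p, collisionIntegrand K f p ∂(μ.prod (μ.prod μ))
        - ∫ p, collisionIntegrand K f p ∂(ν.prod (ν.prod ν)))]
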